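/- In Minkowski space M = ℝ⁴, the transitive closure of the horismos relation recovers the strict causal order: x ≺ᵁ y if and only if x ≺ y and x ≠ y. (In particular, every pair x ≪ y of chronologically related events can be joined by a finite chain of horismos-related events.) -/

import Mathlib

open Set Metric TopologicalSpace

noncomputable section

/-- Minkowski space `M = ℝ⁴` with the Euclidean metric/topology. -/
abbrev M4 : Type := EuclideanSpace ℝ (Fin 4)

/-- The Minkowski quadratic form `Q(x) = x₀² − x₁² − x₂² − x₃²`. -/
def Q (x : M4) : ℝ := x 0 ^ 2 - x 1 ^ 2 - x 2 ^ 2 - x 3 ^ 2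

/-- Chronological order: `x ≪ y`. -/
def chron (x y : M4) : Prop := Q (y - x) > 0 ∧ x 0 < y 0

/-- Causal order: `x ≺ y`. -/
def causal (x y : M4) : Prop := Q (y - x) ≥ 0 ∧ x 0 ≤ y 0

/-- Horismos: `x → y`. -/
def horismos (x y : M4) : Prop := Q (y - x) = 0 ∧ x ≠ y ∧ x 0 < y 0

/-- The light cone `N(x) = N⁺(x) ∪ N⁻(x)`. -/
def lightCone (x : M4) : Set M4 := {y | horismos x y} ∪ {y | horismos y x}

/-- The Zeeman topology `Z`, generated by the sets `Z_ε(x) = (B_ε(x) \ N(x)) ∪ {x}`. -/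
def Zeeman : TopologicalSpace M4 :=
  TopologicalSpace.generateFrom
    {S | ∃ (x : M4) (ε : ℝ), 0 < ε ∧ S = (Metric.ball x ε \ lightCone x) ∪ {x}}

/-- The interval topology `T_R` of a relation `R`, generated by the subbasis of
complements of the sets `R⁺(x) = {y | R x y}` and `R⁻(x) = {y | R y x}`. -/
def intervalTopology (R : M4 → M4 → Prop) : TopologicalSpace M4 :=
  TopologicalSpace.generateFrom
    ({S | ∃ x : M4, S = {y | R x y}ᶜ} ∪ {S | ∃ x : M4, S = {y | R y x}ᶜ})
/-- The transitive closure of horismos recovers the strict causal order; in particular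
chronologically related events are joined by a finite horismos chain. -/
lemma causal_trans' {x y z : M4} (h1 : causal x y) (h2 : causal y z) : causal x z := by
  obtain ⟨hQ1, ht1⟩ := h1
  obtain ⟨hQ2, ht2⟩ := h2
  have key : ∀ i : Fin 4, (z - x) i = (y - x) i + (z - y) i := fun i => by
    show z i - x i = (y i - x i) + (z i - y i); ring
  have ha0 : (y - x) 0 ≥ 0 := by show y 0 - x 0 ≥ 0; linarith
  have hb0 : (z - y) 0 ≥ 0 := by show z 0 - y 0 ≥ 0; linarith
  refine ⟨?_, le_trans ht1 ht2⟩
  unfold Q at *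
  rw [key 0, key 1, key 2, key 3]
  set a0 := (y - x) 0; set a1 := (y - x) 1; set a2 := (y - x) 2; set a3 := (y - x) 3
  set b0 := (z - y) 0; set b1 := (z - y) 1; set b2 := (z - y) 2; set b3 := (z - y) 3
  nlinarith [sq_nonneg (a1*b2 - a2*b1), sq_nonneg (a1*b3 - a3*b1), sq_nonneg (a2*b3 - a3*b2),
    mul_nonneg ha0 hb0, mul_nonneg hQ1 hQ2, sq_nonneg (a0*b0 - a1*b1 - a2*b2 - a3*b3),
    sq_nonneg (a0*b0 + a1*b1 + a2*b2 + a3*b3)]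

lemma chron_split {x y : M4} (h : chron x y) :
    ∃ z : M4, horismos x z ∧ horismos z y := by
  obtain ⟨hQ, ht⟩ := h
  set T := (y - x) 0 with hT
  set v1 := (y - x) 1; set v2 := (y - x) 2; set v3 := (y - x) 3
  have hQ' : T^2 - v1^2 - v2^2 - v3^2 > 0 := hQ
  have hT0 : T > 0 := show y 0 - x 0 > 0 from sub_pos.mpr ht
  have hd : T - v1 > 0 := by nlinarith [sq_nonneg v2, sq_nonneg v3, sq_nonneg (T + v1)]
  set a : ℝ := (T^2 - v1^2 - v2^2 - v3^2) / (2 * (T - v1)) with ha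
  have ha0 : a > 0 := div_pos hQ' (by linarith)
  have haT : T - a > 0 := by
    rw [ha, sub_div' (by positivity : (2:ℝ) * (T - v1) ≠ 0)]
    apply div_pos _ (by linarith)
    nlinarith [sq_nonneg (T - v1), sq_nonneg v2, sq_nonneg v3]
  have hkey : T^2 - v1^2 - v2^2 - v3^2 = 2 * (T - v1) * a := by
    rw [ha]; field_simp
  set w : M4 := WithLp.toLp 2 (fun i => if i = 0 then a else if i = 1 then a else 0 : Fin 4 → ℝ) with hw
  have hw0 : w 0 = a := rfl
  have hw1 : w 1 = a := rfl
  have hw2 : w 2 = 0 := rfl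
  have hw3 : w 3 = 0 := rfl
  refine ⟨x + w, ⟨?_, ?_, ?_⟩, ?_, ?_, ?_⟩
  · show ((x + w) - x) 0 ^ 2 - _ - _ - _ = 0
    have h0 : ∀ i, ((x + w) - x) i = w i := fun i => by
      show x i + w i - x i = w i; ring
    rw [h0 0, h0 1, h0 2, h0 3, hw0, hw1, hw2, hw3]; ring
  · intro hxz
    have : x 0 = x 0 + w 0 := congrArg (fun v : M4 => v 0) hxz
    rw [hw0] at this; linarith
  · show x 0 < x 0 + w 0
    rw [hw0]; linarith
  · show (y - (x + w)) 0 ^ 2 - _ - _ - _ = 0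
    have h0 : ∀ i, (y - (x + w)) i = (y - x) i - w i := fun i => by
      show y i - (x i + w i) = (y i - x i) - w i; ring
    rw [h0 0, h0 1, h0 2, h0 3, hw0, hw1, hw2, hw3]
    show (T - a)^2 - (v1 - a)^2 - (v2 - 0)^2 - (v3 - 0)^2 = 0
    nlinarith [hkey]
  · intro hzy
    have : x 0 + w 0 = y 0 := congrArg (fun v : M4 => v 0) hzy
    rw [hw0] at this
    have : T = a := by show y 0 - x 0 = a; linarith
    linarith
  · show x 0 + w 0 < y 0
    rw [hw0]
    have : T - a > 0 := haT
    show x 0 + a < y 0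
    have hT' : y 0 - x 0 = T := rfl
    linarith

lemma transGen_strict {x y : M4} (h : Relation.TransGen horismos x y) :
    causal x y ∧ x 0 < y 0 := by
  induction h with
  | single h => exact ⟨⟨ge_of_eq h.1, le_of_lt h.2.2⟩, h.2.2⟩
  | tail _ h ih => exact ⟨causal_trans' ih.1 ⟨ge_of_eq h.1, le_of_lt h.2.2⟩, lt_trans ih.2 h.2.2⟩

theorem transGen_horismos_iff_strict_causal :
    (∀ x y : M4, Relation.TransGen horismos x y ↔ (causal x y ∧ x ≠ y)) ∧
    (∀ x y : M4, chron x y → Relation.TransGen horismos x y) := by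
  have hback : ∀ x y : M4, chron x y → Relation.TransGen horismos x y := by
    intro x y h
    obtain ⟨z, h1, h2⟩ := chron_split h
    exact Relation.TransGen.head h1 (Relation.TransGen.single h2)
  refine ⟨fun x y => ⟨fun h => ?_, fun ⟨hc, hne⟩ => ?_⟩, hback⟩
  · obtain ⟨hc, ht⟩ := transGen_strict h
    exact ⟨hc, fun he => absurd (he ▸ ht) (lt_irrefl _)⟩
  · obtain ⟨hQ, ht⟩ := hc
    rcases eq_or_lt_of_le hQ with hQ0 | hQpos
    · -- Q (y - x) = 0 : single horismos step, need x 0 < y 0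
      have ht' : x 0 < y 0 := by
        rcases lt_or_eq_of_le ht with h | h
        · exact h
        · exfalso
          apply hne
          have h0 : (y - x) 0 = 0 := by show y 0 - x 0 = 0; linarith
          have hQ' : (y - x) 0 ^ 2 - (y - x) 1 ^ 2 - (y - x) 2 ^ 2 - (y - x) 3 ^ 2 = 0 := hQ0.symm
          rw [h0] at hQ'
          have h1 : (y - x) 1 = 0 := by nlinarith [sq_nonneg ((y-x) 2), sq_nonneg ((y-x) 3)]
          have h2 : (y - x) 2 = 0 := by nlinarith [sq_nonneg ((y-x) 1), sq_nonneg ((y-x) 3)]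
          have h3 : (y - x) 3 = 0 := by nlinarith [sq_nonneg ((y-x) 1), sq_nonneg ((y-x) 2)]
          have hsub : y - x = 0 := by
            ext i
            fin_cases i
            · exact h0
            · exact h1
            · exact h2
            · exact h3
          have := sub_eq_zero.mp hsub
          exact this.symm
      exact Relation.TransGen.single ⟨hQ0.symm, hne, ht'⟩
    · -- Q (y - x) > 0 : chron, need x 0 < y 0
      have ht' : x 0 < y 0 := by
        rcases lt_or_eq_of_le ht with h | h
        · exact h
        · exfalso
          have h0 : (y - x) 0 = 0 := by show y 0 - x 0 = 0; linarith
          have hQ' : (0:ℝ) < (y - x) 0 ^ 2 - (y - x) 1 ^ 2 - (y - x) 2 ^ 2 - (y - x) 3 ^ 2 := hQpos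
          rw [h0] at hQ'
          nlinarith [sq_nonneg ((y-x) 1), sq_nonneg ((y-x) 2), sq_nonneg ((y-x) 3)]
      exact hback x y ⟨hQpos, ht'⟩
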